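/- Let H ⊆ G be groups such that Z[H] and Z[G] are right Ore domains with right quotient skew fields K(H) and K(G). Then for any right Z[H]-module M, the natural map M ⊗_{Z[H]} K(H) → M ⊗_{Z[H]} K(G) is injective, and the K(H)-dimension of M ⊗_{Z[H]} K(H) equals the K(G)-dimension of M ⊗_{Z[H]} K(G). -/

import Mathlib

open MulOpposite

/-- Let `H ⊆ G` be groups such that the group rings `ℤ[H]`, `ℤ[G]`
are right Ore domains with right quotient skew fields `K = K(H)`, `L = K(G)` (given
abstractly by embeddings with the right-fraction property `q = r·s⁻¹`), and let
`k : K → L` be the induced embedding.  For a right `ℤ[H]`-module `M` (a module over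
`ℤ[H]ᵐᵒᵖ`), let `V = M ⊗_{ℤ[H]} K` and `V' = M ⊗_{ℤ[H]} L` be given by their universal
properties, with the natural map `θ : V → V'`.  Then `θ` is injective and the
`K`-dimension of `V` equals the `L`-dimension of `V'`. -/
theorem tensor_quotient_field_injective_and_rank
    (H G : Type) [Group H] [Group G] (ι : H →* G) (hι : Function.Injective ι)
    (K L : Type) [DivisionRing K] [DivisionRing L]
    (jK : MonoidAlgebra ℤ H →+* K) (hjK : Function.Injective jK)
    (hKfrac : ∀ q : K, ∃ r s : MonoidAlgebra ℤ H, s ≠ 0 ∧ q * jK s = jK r)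
    (jL : MonoidAlgebra ℤ G →+* L) (hjL : Function.Injective jL)
    (hLfrac : ∀ q : L, ∃ r s : MonoidAlgebra ℤ G, s ≠ 0 ∧ q * jL s = jL r)
    (k : K →+* L)
    (hcomp : ∀ r : MonoidAlgebra ℤ H, k (jK r) = jL (MonoidAlgebra.mapDomainRingHom ℤ ι r))
    (M : Type) [AddCommGroup M] [Module (MonoidAlgebra ℤ H)ᵐᵒᵖ M]
    -- `V = M ⊗_{ℤ[H]} K` via its universal property
    (V : Type) [AddCommGroup V] [Module Kᵐᵒᵖ V]
    (ιV : M →+ V)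
    (hιV : ∀ (m : M) (r : MonoidAlgebra ℤ H), ιV (op r • m) = op (jK r) • ιV m)
    (hVuniv : ∀ (W : Type) [AddCommGroup W] [Module Kᵐᵒᵖ W] (f : M →+ W),
      (∀ (m : M) (r : MonoidAlgebra ℤ H), f (op r • m) = op (jK r) • f m) →
      ∃! g : V →+ W, (∀ (c : K) (v : V), g (op c • v) = op c • g v) ∧ ∀ m, g (ιV m) = f m)
    -- `V' = M ⊗_{ℤ[H]} L` via its universal property
    (V' : Type) [AddCommGroup V'] [Module Lᵐᵒᵖ V']
    (ιV' : M →+ V')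
    (hιV' : ∀ (m : M) (r : MonoidAlgebra ℤ H),
      ιV' (op r • m) = op (jL (MonoidAlgebra.mapDomainRingHom ℤ ι r)) • ιV' m)
    (hV'univ : ∀ (W : Type) [AddCommGroup W] [Module Lᵐᵒᵖ W] (f : M →+ W),
      (∀ (m : M) (r : MonoidAlgebra ℤ H),
        f (op r • m) = op (jL (MonoidAlgebra.mapDomainRingHom ℤ ι r)) • f m) →
      ∃! g : V' →+ W, (∀ (c : L) (v : V'), g (op c • v) = op c • g v) ∧ ∀ m, g (ιV' m) = f m)
    -- the natural map `θ : M ⊗ K(H) → M ⊗ K(G)`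
    (θ : V →+ V')
    (hθsmul : ∀ (c : K) (v : V), θ (op c • v) = op (k c) • θ v)
    (hθ : ∀ m : M, θ (ιV m) = ιV' m) :
    Function.Injective θ ∧ Module.rank Kᵐᵒᵖ V = Module.rank Lᵐᵒᵖ V' := by

  classical
  -- A `K`-basis of `V`.
  set b := Module.Basis.ofVectorSpace Kᵐᵒᵖ V with hb
  set I := Module.Basis.ofVectorSpaceIndex Kᵐᵒᵖ V with hI
  -- `L` as a right `K`-vector space via `k`.
  letI instKL : Module Kᵐᵒᵖ L := Module.compHom L (RingHom.op k)
  have hsmulKL : ∀ (c : K) (x : L), (op c • x) = x * k c := fun c x => rfl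
  have hsmulLL : ∀ (c x : L), (op c • x) = x * c := fun c x => rfl
  -- Key construction: for each basis index `i`, an `L`-linear functional `gᵢ : V' → L`
  -- with `gᵢ (θ v) = k (coordᵢ v)`.
  have key : ∀ i : I, ∃ g : V' →+ L,
      (∀ (c : L) (v' : V'), g (op c • v') = g v' * c) ∧
      (∀ v : V, g (θ v) = k ((b.coord i v).unop)) := by
    intro i
    -- the additive map `m ↦ k (coordᵢ (ιV m))`
    set f : M →+ L := AddMonoidHom.mk' (fun m => k ((b.coord i (ιV m)).unop))
      (by intro m₁ m₂; simp [map_add]) with hf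
    have hfval : ∀ m, f m = k ((b.coord i (ιV m)).unop) := fun m => rfl
    have hfcondK : ∀ (m : M) (r : MonoidAlgebra ℤ H), f (op r • m) = f m * k (jK r) := by
      intro m r
      rw [hfval, hfval, hιV, map_smul]
      have : (op (jK r) • b.coord i (ιV m)).unop = (b.coord i (ιV m)).unop * jK r := rfl
      rw [this, map_mul]
    have hfcondL : ∀ (m : M) (r : MonoidAlgebra ℤ H),
        f (op r • m) = op (jL (MonoidAlgebra.mapDomainRingHom ℤ ι r)) • f m := by
      intro m r
      rw [hsmulLL, ← hcomp, hfcondK]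
    obtain ⟨g, ⟨hg1, hg2⟩, -⟩ := hV'univ L f hfcondL
    refine ⟨g, fun c v' => by rw [hg1, hsmulLL], ?_⟩
    -- identify `g ∘ θ` with `k ∘ coordᵢ` using the universal property of `V`
    have hfcondK' : ∀ (m : M) (r : MonoidAlgebra ℤ H), f (op r • m) = op (jK r) • f m := by
      intro m r; rw [hsmulKL, hfcondK]
    obtain ⟨g', -, hu⟩ := hVuniv L f hfcondK'
    set A : V →+ L := g.comp θ with hA
    set B : V →+ L := AddMonoidHom.mk' (fun v => k ((b.coord i v).unop))
      (by intro v₁ v₂; simp [map_add]) with hB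
    have hAprop : (∀ (c : K) (v : V), A (op c • v) = op c • A v) ∧ ∀ m, A (ιV m) = f m := by
      constructor
      · intro c v
        show g (θ (op c • v)) = op c • g (θ v)
        rw [hθsmul, hg1, hsmulLL, hsmulKL]
      · intro m
        show g (θ (ιV m)) = f m
        rw [hθ, hg2]
    have hBprop : (∀ (c : K) (v : V), B (op c • v) = op c • B v) ∧ ∀ m, B (ιV m) = f m := by
      constructor
      · intro c v
        show k ((b.coord i (op c • v)).unop) = op c • k ((b.coord i v).unop)
        rw [map_smul, hsmulKL]
        have : (op c • b.coord i v).unop = (b.coord i v).unop * c := rfl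
        rw [this, map_mul]
      · intro m; rfl
    have hAB : A = B := (hu A hAprop).trans (hu B hBprop).symm
    intro v
    have := congrArg (fun φ : V →+ L => φ v) hAB
    exact this
  -- the `L`-span of the image of `ιV'` is all of `V'`
  have hspanV' : Submodule.span Lᵐᵒᵖ (Set.range ιV') = ⊤ := by
    by_contra hne
    set N : Submodule Lᵐᵒᵖ V' := Submodule.span Lᵐᵒᵖ (Set.range ιV') with hN
    obtain ⟨g0, -, hu⟩ := hV'univ (V' ⧸ N) (0 : M →+ V' ⧸ N)
      (by intro m r; simp)
    set Q : V' →+ V' ⧸ N := N.mkQ.toAddMonoidHom with hQ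
    have hQprop : (∀ (c : L) (v' : V'), Q (op c • v') = op c • Q v') ∧
        ∀ m, Q (ιV' m) = (0 : M →+ V' ⧸ N) m := by
      refine ⟨fun c v' => N.mkQ.map_smul _ _, fun m => ?_⟩
      show N.mkQ (ιV' m) = 0
      rw [Submodule.mkQ_apply, Submodule.Quotient.mk_eq_zero]
      exact Submodule.subset_span ⟨m, rfl⟩
    have hZprop : (∀ (c : L) (v' : V'), (0 : V' →+ V' ⧸ N) (op c • v') = op c • (0 : V' →+ V' ⧸ N) v') ∧
        ∀ m, (0 : V' →+ V' ⧸ N) (ιV' m) = (0 : M →+ V' ⧸ N) m := by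
      constructor <;> intros <;> simp
    have hQ0 : Q = 0 := (hu Q hQprop).trans (hu 0 hZprop).symm
    apply hne
    rw [Submodule.eq_top_iff']
    intro x
    have : N.mkQ x = 0 := congrArg (fun φ : V' →+ V' ⧸ N => φ x) hQ0
    rwa [Submodule.mkQ_apply, Submodule.Quotient.mk_eq_zero] at this
  -- the image of the basis under θ spans V'
  have hmem : ∀ v : V, θ v ∈ Submodule.span Lᵐᵒᵖ (Set.range fun i : I => θ (b i)) := by
    intro v
    have hv : v ∈ Submodule.span Kᵐᵒᵖ (Set.range b) := by rw [b.span_eq]; trivial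
    induction hv using Submodule.span_induction with
    | mem x hx =>
        obtain ⟨i, rfl⟩ := hx
        exact Submodule.subset_span ⟨i, rfl⟩
    | zero => simp
    | add x y _ _ hx hy => rw [map_add]; exact Submodule.add_mem _ hx hy
    | smul c x _ hx =>
        induction c using MulOpposite.rec' with
        | h c => rw [hθsmul]; exact Submodule.smul_mem _ _ hx
  have hspan2 : Submodule.span Lᵐᵒᵖ (Set.range fun i : I => θ (b i)) = ⊤ := by
    rw [eq_top_iff, ← hspanV', Submodule.span_le]
    rintro _ ⟨m, rfl⟩
    rw [← hθ m]
    exact hmem (ιV m)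
  -- linear independence of the image of the basis
  have hindep : LinearIndependent Lᵐᵒᵖ (fun i : I => θ (b i)) := by
    rw [linearIndependent_iff']
    intro s c hsum i hi
    obtain ⟨g, hg1, hg2⟩ := key i
    set Gl : V' →ₗ[Lᵐᵒᵖ] L :=
      { toFun := g, map_add' := map_add g,
        map_smul' := by
          intro cc v'
          induction cc using MulOpposite.rec' with
          | h cc =>
              show g (op cc • v') = op cc • g v'
              rw [hg1, hsmulLL] } with hGl
    have h0 : (0 : L) = ∑ j ∈ s, c j • k ((b.coord i (b j)).unop) := by
      have := congrArg Gl hsum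
      rw [map_zero, map_sum] at this
      refine this.symm.trans (Finset.sum_congr rfl fun j _ => ?_)
      rw [map_smul]
      show c j • g (θ (b j)) = _
      rw [hg2]
    rw [Finset.sum_eq_single i (fun j _ hj => by
        rw [b.coord_apply, b.repr_self, Finsupp.single_apply, if_neg hj]
        simp) (fun h => absurd hi h)] at h0
    rw [b.coord_apply, b.repr_self, Finsupp.single_apply, if_pos rfl] at h0
    have : (0 : L) = c i • (1 : L) := by simpa using h0
    have : (0 : L) = (c i).unop := by
      rw [this]; exact (hsmulLL (c i).unop 1).trans (one_mul _)
    exact unop_injective this.symm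
  -- injectivity of θ
  have hinj : Function.Injective θ := by
    rw [injective_iff_map_eq_zero]
    intro v hv
    have hcoord : ∀ i : I, b.coord i v = 0 := by
      intro i
      obtain ⟨g, -, hg2⟩ := key i
      have : k ((b.coord i v).unop) = 0 := by rw [← hg2, hv, map_zero]
      have h0 : (b.coord i v).unop = 0 := k.injective (by simpa using this)
      exact unop_injective h0
    exact b.forall_coord_eq_zero_iff.mp hcoord
  refine ⟨hinj, ?_⟩
  -- ranks agree: both equal the cardinality of `I`
  set b2 : Module.Basis I Lᵐᵒᵖ V' := Module.Basis.mk hindep (by rw [hspan2]) with hb2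
  rw [← b.mk_eq_rank'', ← b2.mk_eq_rank'']
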